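/- arXiv:2203.03433 — 2 statements merged into one kernel-verified Lean document; each statement's English description precedes it below -/
import Mathlib

section
/- A positive linear map φ: M_n → M_m satisfies Tr[K* X⁺ K] ≥ Tr[φ*(K)* φ*(X)⁺ φ*(K)] for all (K,X) ∈ M_m × M_m⁺ with ker(X) ⊆ ker(K*) if and only if φ satisfies the Schwarz inequality φ(A*A) ≥ φ(A)* φ(A) for all A ∈ M_n. -/
open Matrix ComplexOrder
set_option linter.unusedSectionVars false
set_option maxHeartbeats 1000000

/-- `B` is the Moore–Penrose pseudoinverse of `A`. -/
def IsMoorePenroseInv {m : Type*} [Fintype m]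
    (A B : Matrix m m ℂ) : Prop :=
  A * B * A = A ∧ B * A * B = B ∧ (A * B)ᴴ = A * B ∧ (B * A)ᴴ = B * A

section Helpers
variable {α : Type*} [Fintype α] [DecidableEq α]

variable {α : Type*} [Fintype α] [DecidableEq α]

lemma eq_zero_of_trace_conjTranspose_mul_self {β : Type*} [Fintype β]
    (D : Matrix α β ℂ) (h : (Dᴴ * D).trace = 0) : D = 0 := by
  have hsum : ∑ j, dotProduct (star fun i => D i j) (fun i => D i j) = 0 := by
    rw [← h]
    simp [Matrix.trace, Matrix.mul_apply, Matrix.diag, dotProduct, conjTranspose_apply]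
  have h2 := (Finset.sum_eq_zero_iff_of_nonneg
    (fun j _ => dotProduct_star_self_nonneg (fun i => D i j))).mp hsum
  ext i j
  exact congrFun (dotProduct_star_self_eq_zero.mp (h2 j (Finset.mem_univ j))) i

lemma eq_of_trace_pairing {M N : Matrix α α ℂ}
    (h : ∀ B : Matrix α α ℂ, (Mᴴ * B).trace = (Nᴴ * B).trace) : M = N := by
  have h0 : ((M - N)ᴴ * (M - N)).trace = 0 := by
    have := h (M - N)
    rw [conjTranspose_sub, sub_mul, trace_sub, sub_eq_zero, this]
  have := eq_zero_of_trace_conjTranspose_mul_self _ h0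
  exact sub_eq_zero.mp this

lemma trace_mul_psd_nonneg' {M : Matrix α α ℂ} (hM : M.PosSemidef) : 0 ≤ M.trace := by
  rw [Matrix.trace]
  refine Finset.sum_nonneg fun i _ => ?_
  have := hM.dotProduct_mulVec_nonneg (Pi.single i 1)
  simpa [Matrix.mulVec_single, dotProduct, Pi.single_apply] using this

lemma trace_mul_psd_nonneg {A B : Matrix α α ℂ} (hA : A.PosSemidef) (hB : B.PosSemidef) :
    0 ≤ (A * B).trace := by
  open scoped MatrixOrder in
  obtain ⟨C, rfl⟩ := CStarAlgebra.nonneg_iff_eq_star_mul_self.mp hB.nonneg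
  rw [Matrix.star_eq_conjTranspose]
  rw [show A * (Cᴴ * C) = A * Cᴴ * C by rw [Matrix.mul_assoc], trace_mul_cycle]
  exact trace_mul_psd_nonneg' (hA.mul_mul_conjTranspose_same C)


noncomputable def matFun {A : Matrix α α ℂ} (hA : A.IsHermitian) (f : ℝ → ℝ) : Matrix α α ℂ :=
  (hA.eigenvectorUnitary : Matrix α α ℂ) * diagonal (fun i => ((f (hA.eigenvalues i) : ℝ) : ℂ))
    * star (hA.eigenvectorUnitary : Matrix α α ℂ)

lemma matFun_mul {A : Matrix α α ℂ} (hA : A.IsHermitian) (f g : ℝ → ℝ) :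
    matFun hA f * matFun hA g = matFun hA (fun x => f x * g x) := by
  have hU : star (hA.eigenvectorUnitary : Matrix α α ℂ) * (hA.eigenvectorUnitary : Matrix α α ℂ) = 1 :=
    Matrix.mem_unitaryGroup_iff'.mp hA.eigenvectorUnitary.2
  simp only [matFun, Matrix.mul_assoc]
  rw [← Matrix.mul_assoc (star _) _ _, hU, Matrix.one_mul, ← Matrix.mul_assoc (diagonal _),
    diagonal_mul_diagonal]
  push_cast
  ring_nf

lemma matFun_conjT {A : Matrix α α ℂ} (hA : A.IsHermitian) (f : ℝ → ℝ) :
    (matFun hA f)ᴴ = matFun hA f := by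
  have hD : (diagonal (fun i => ((f (hA.eigenvalues i) : ℝ) : ℂ)))ᴴ
      = diagonal (fun i => ((f (hA.eigenvalues i) : ℝ) : ℂ)) := by
    rw [diagonal_conjTranspose]
    have : (star fun i => ((f (hA.eigenvalues i) : ℝ) : ℂ)) = fun i => ((f (hA.eigenvalues i) : ℝ) : ℂ) := by
      funext i
      simp only [Pi.star_apply, Complex.star_def]
      exact Complex.conj_ofReal _
    rw [this]
  simp only [matFun, Matrix.star_eq_conjTranspose, conjTranspose_mul,
    conjTranspose_conjTranspose, hD, Matrix.mul_assoc]

lemma matFun_id {A : Matrix α α ℂ} (hA : A.IsHermitian) :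
    matFun hA (fun x => x) = A := by
  conv_rhs => rw [hA.spectral_theorem]
  rfl

lemma matFun_posSemidef {A : Matrix α α ℂ} (hA : A.IsHermitian) {f : ℝ → ℝ}
    (hf : ∀ i, 0 ≤ f (hA.eigenvalues i)) : (matFun hA f).PosSemidef := by
  have : (diagonal (fun i => ((f (hA.eigenvalues i) : ℝ) : ℂ))).PosSemidef := by
    refine posSemidef_diagonal_iff.mpr fun i => ?_
    exact_mod_cast hf i
  simpa [matFun, Matrix.star_eq_conjTranspose] using
    this.mul_mul_conjTranspose_same (hA.eigenvectorUnitary : Matrix α α ℂ)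

lemma matFun_sub {A : Matrix α α ℂ} (hA : A.IsHermitian) (f g : ℝ → ℝ) :
    matFun hA f - matFun hA g = matFun hA (fun x => f x - g x) := by
  simp only [matFun, ← Matrix.sub_mul, ← Matrix.mul_sub, diagonal_sub]
  push_cast
  ring_nf

lemma matFun_smul_one {A : Matrix α α ℂ} (hA : A.IsHermitian) (c : ℝ) :
    matFun hA (fun _ => c) = (c : ℂ) • 1 := by
  have hU : (hA.eigenvectorUnitary : Matrix α α ℂ) * star (hA.eigenvectorUnitary : Matrix α α ℂ) = 1 :=
    Matrix.mem_unitaryGroup_iff.mp hA.eigenvectorUnitary.2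
  have : diagonal (fun _ : α => (c : ℂ)) = (c : ℂ) • 1 := by
    rw [← diagonal_one, ← diagonal_smul]
    ext i j
    by_cases h : i = j <;> simp [diagonal_apply, h]
  rw [matFun, this, Matrix.mul_smul, Matrix.mul_one, Matrix.smul_mul, hU]

lemma mp_unique {A B C : Matrix α α ℂ} (hB : IsMoorePenroseInv A B)
    (hC : IsMoorePenroseInv A C) : B = C := by
  obtain ⟨b1, b2, b3, b4⟩ := hB
  obtain ⟨c1, c2, c3, c4⟩ := hC
  have hAB : A * B = A * C := by
    calc A * B = (A * B)ᴴ := b3.symm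
    _ = ((A * C * A) * B)ᴴ := by rw [c1]
    _ = (A * B)ᴴ * (A * C)ᴴ := by rw [conjTranspose_mul (A * C * A) B]; rw [show A * C * A = (A*C)*A from rfl, conjTranspose_mul (A*C) A]; noncomm_ring [conjTranspose_mul]
    _ = A * B * (A * C) := by rw [b3, c3]
    _ = (A * B * A) * C := by noncomm_ring
    _ = A * C := by rw [b1]
  have hBA : B * A = C * A := by
    calc B * A = (B * A)ᴴ := b4.symm
    _ = (B * (A * C * A))ᴴ := by rw [c1]
    _ = (C * A)ᴴ * (B * A)ᴴ := by rw [show B * (A * C * A) = (B*A)*(C*A) by noncomm_ring, conjTranspose_mul]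
    _ = (C * A) * (B * A) := by rw [b4, c4]
    _ = C * (A * B * A) := by noncomm_ring
    _ = C * A := by rw [b1]
  calc B = B * A * B := b2.symm
  _ = C * A * B := by rw [hBA]
  _ = C * (A * B) := by rw [Matrix.mul_assoc]
  _ = C * (A * C) := by rw [hAB]
  _ = C * A * C := by rw [Matrix.mul_assoc]
  _ = C := c2

lemma A_mul_matFun {A : Matrix α α ℂ} (hA : A.IsHermitian) (f : ℝ → ℝ) :
    A * matFun hA f = matFun hA (fun x => x * f x) := by
  have h := matFun_mul hA (fun x => x) f
  rwa [matFun_id] at h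

lemma matFun_mul_A {A : Matrix α α ℂ} (hA : A.IsHermitian) (f : ℝ → ℝ) :
    matFun hA f * A = matFun hA (fun x => f x * x) := by
  have h := matFun_mul hA f (fun x => x)
  rwa [matFun_id] at h

lemma matFun_isMP {A : Matrix α α ℂ} (hA : A.IsHermitian) :
    IsMoorePenroseInv A (matFun hA fun x => x⁻¹) := by
  refine ⟨?_, ?_, ?_, ?_⟩
  · rw [A_mul_matFun, matFun_mul_A]
    have hfun : (fun x : ℝ => x * x⁻¹ * x) = fun x : ℝ => x := by
      funext x
      rcases eq_or_ne x 0 with h | h <;> field_simp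
    rw [hfun, matFun_id]
  · rw [matFun_mul_A, matFun_mul]
    have hfun : (fun x : ℝ => x⁻¹ * x * x⁻¹) = fun x : ℝ => x⁻¹ := by
      funext x
      rcases eq_or_ne x 0 with h | h <;> field_simp
    rw [hfun]
  · rw [A_mul_matFun, matFun_conjT]
  · rw [matFun_mul_A, matFun_conjT]

lemma mp_inv_posSemidef {A B : Matrix α α ℂ} (hA : A.PosSemidef)
    (hB : IsMoorePenroseInv A B) : B.PosSemidef := by
  have : B = matFun hA.1 fun x => x⁻¹ := mp_unique hB (matFun_isMP hA.1)
  rw [this]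
  exact matFun_posSemidef hA.1 fun i => inv_nonneg.mpr (hA.eigenvalues_nonneg i)

lemma psd_le_smul_one {A : Matrix α α ℂ} (hA : A.PosSemidef) :
    ∃ c : ℝ, 0 ≤ c ∧ ((c : ℂ) • 1 - A).PosSemidef := by
  set c : ℝ := ∑ i, |hA.1.eigenvalues i| with hc
  refine ⟨c, Finset.sum_nonneg fun i _ => abs_nonneg _, ?_⟩
  have h := matFun_sub hA.1 (fun _ => c) (fun x => x)
  rw [matFun_smul_one, matFun_id] at h
  rw [h]
  refine matFun_posSemidef hA.1 fun i => ?_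
  have h1 : hA.1.eigenvalues i ≤ |hA.1.eigenvalues i| := le_abs_self _
  have h2 : |hA.1.eigenvalues i| ≤ ∑ j, |hA.1.eigenvalues j| :=
    Finset.single_le_sum (f := fun j => |hA.1.eigenvalues j|)
      (fun j _ => abs_nonneg _) (Finset.mem_univ i)
  simp only [sub_nonneg, hc]
  linarith

lemma herm_decomp {A : Matrix α α ℂ} (hA : A.IsHermitian) :
    ∃ P Q : Matrix α α ℂ, P.PosSemidef ∧ Q.PosSemidef ∧ A = P - Q := by
  refine ⟨matFun hA (fun x => max x 0), matFun hA (fun x => max (-x) 0),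
    matFun_posSemidef hA fun i => le_max_right _ _,
    matFun_posSemidef hA fun i => le_max_right _ _, ?_⟩
  have h := matFun_sub hA (fun x => max x 0) (fun x => max (-x) 0)
  have hfun : (fun x : ℝ => max x 0 - max (-x) 0) = fun x : ℝ => x :=
    funext fun x => max_zero_sub_max_neg_zero_eq_self x
  rw [hfun, matFun_id] at h
  exact h.symm

lemma mat_decomp (K : Matrix α α ℂ) :
    ∃ P₁ P₂ P₃ P₄ : Matrix α α ℂ, P₁.PosSemidef ∧ P₂.PosSemidef ∧ P₃.PosSemidef ∧
      P₄.PosSemidef ∧ K = P₁ - P₂ + Complex.I • (P₃ - P₄) := by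
  have hH : ((2⁻¹ : ℂ) • (K + Kᴴ)).IsHermitian := by
    rw [Matrix.IsHermitian, conjTranspose_smul, conjTranspose_add, conjTranspose_conjTranspose]
    rw [show star (2⁻¹ : ℂ) = 2⁻¹ by simp]
    rw [add_comm]
  have hJ : (((-2⁻¹ : ℂ) * Complex.I) • (K - Kᴴ)).IsHermitian := by
    rw [Matrix.IsHermitian, conjTranspose_smul, conjTranspose_sub, conjTranspose_conjTranspose]
    rw [show star ((-2⁻¹ : ℂ) * Complex.I) = (2⁻¹ : ℂ) * Complex.I by simp [Complex.ext_iff]]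
    rw [show ((-2⁻¹ : ℂ) * Complex.I) = -((2⁻¹ : ℂ) * Complex.I) by ring, neg_smul, ← smul_neg,
      neg_sub]
  obtain ⟨P₁, P₂, h1, h2, hPQ⟩ := herm_decomp hH
  obtain ⟨P₃, P₄, h3, h4, hRS⟩ := herm_decomp hJ
  refine ⟨P₁, P₂, P₃, P₄, h1, h2, h3, h4, ?_⟩
  rw [← hPQ, ← hRS, smul_smul]
  rw [show Complex.I * ((-2⁻¹ : ℂ) * Complex.I) = (2⁻¹ : ℂ) by
    rw [mul_comm, mul_assoc, Complex.I_mul_I]; ring]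
  module

lemma sq_expand {A Ap K B : Matrix α α ℂ} (hApH : Apᴴ = Ap)
    (hKA : A * Ap * K = K) (hKA2 : Kᴴ * Ap * A = Kᴴ) :
    (Ap * K - B)ᴴ * A * (Ap * K - B)
      = Kᴴ * Ap * K - Kᴴ * B - Bᴴ * K + Bᴴ * A * B := by
  have hct : (Ap * K - B)ᴴ = Kᴴ * Ap - Bᴴ := by
    rw [conjTranspose_sub, conjTranspose_mul, hApH]
  rw [hct]
  have e1 : (Kᴴ * Ap) * A * (Ap * K) = Kᴴ * Ap * K := by
    calc (Kᴴ * Ap) * A * (Ap * K) = (Kᴴ * Ap * A) * (Ap * K) := by noncomm_ring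
    _ = Kᴴ * (Ap * K) := by rw [hKA2]
    _ = Kᴴ * Ap * K := by noncomm_ring
  have e2 : (Kᴴ * Ap) * A * B = Kᴴ * B := by
    calc (Kᴴ * Ap) * A * B = (Kᴴ * Ap * A) * B := by noncomm_ring
    _ = Kᴴ * B := by rw [hKA2]
  have e3 : Bᴴ * A * (Ap * K) = Bᴴ * K := by
    calc Bᴴ * A * (Ap * K) = Bᴴ * (A * Ap * K) := by noncomm_ring
    _ = Bᴴ * K := by rw [hKA]
  calc (Kᴴ * Ap - Bᴴ) * A * (Ap * K - B)
      = (Kᴴ * Ap) * A * (Ap * K) - (Kᴴ * Ap) * A * B - Bᴴ * A * (Ap * K) + Bᴴ * A * B := by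
        noncomm_ring
  _ = Kᴴ * Ap * K - Kᴴ * B - Bᴴ * K + Bᴴ * A * B := by rw [e1, e2, e3]

lemma proj_fact {A Ap K : Matrix α α ℂ} (hmp : IsMoorePenroseInv A Ap)
    (hker : ∀ u, A *ᵥ u = 0 → Kᴴ *ᵥ u = 0) :
    Kᴴ * Ap * A = Kᴴ ∧ Ap * A * K = K := by
  obtain ⟨a1, a2, a3, a4⟩ := hmp
  have h0 : Kᴴ * (1 - Ap * A) = 0 := by
    have hcol : ∀ u, (Kᴴ * (1 - Ap * A)) *ᵥ u = 0 := by
      intro u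
      have hXu : A *ᵥ ((1 - Ap * A) *ᵥ u) = 0 := by
        rw [Matrix.mulVec_mulVec, Matrix.mul_sub, Matrix.mul_one, ← Matrix.mul_assoc, a1,
          sub_self, Matrix.zero_mulVec]
      have := hker _ hXu
      rwa [Matrix.mulVec_mulVec] at this
    ext i j
    have := congrFun (hcol (Pi.single j 1)) i
    simpa [Matrix.mulVec_single] using this
  have h1 : Kᴴ * Ap * A = Kᴴ := by
    rw [Matrix.mul_sub, Matrix.mul_one, sub_eq_zero] at h0
    rw [Matrix.mul_assoc, ← h0]
  refine ⟨h1, ?_⟩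
  have := congrArg conjTranspose h1
  rw [conjTranspose_mul, conjTranspose_mul, conjTranspose_conjTranspose] at this
  calc Ap * A * K = (Ap * A)ᴴ * K := by rw [a4]
  _ = Aᴴ * Apᴴ * K := by rw [conjTranspose_mul]
  _ = K := by rw [Matrix.mul_assoc, this]

lemma posSemidef_outer (v : α → ℂ) : (vecMulVec v (star v)).PosSemidef := by
  rw [posSemidef_iff_dotProduct_mulVec]
  constructor
  · ext i j
    simp [vecMulVec_apply, conjTranspose_apply, mul_comm]
  · intro x
    have hid : star x ⬝ᵥ (vecMulVec v (star v)) *ᵥ x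
        = star (star v ⬝ᵥ x) * (star v ⬝ᵥ x) := by
      simp only [dotProduct, Matrix.mulVec, vecMulVec_apply, Pi.star_apply, star_sum, star_mul',
        star_star, Finset.mul_sum, Finset.sum_mul]
      rw [Finset.sum_comm]
      refine Finset.sum_congr rfl fun i _ => Finset.sum_congr rfl fun j _ => ?_
      ring
    rw [hid]
    exact star_mul_self_nonneg _

lemma trace_mul_outer (M : Matrix α α ℂ) (v : α → ℂ) :
    (M * vecMulVec v (star v)).trace = star v ⬝ᵥ M *ᵥ v := by
  simp only [Matrix.trace, Matrix.diag, Matrix.mul_apply, vecMulVec_apply, dotProduct,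
    Matrix.mulVec, Pi.star_apply, Finset.mul_sum]
  refine Finset.sum_congr rfl fun i _ => Finset.sum_congr rfl fun j _ => ?_
  ring

lemma psd_smul {M : Matrix α α ℂ} (hM : M.PosSemidef) {r : ℝ} (hr : 0 ≤ r) :
    ((r : ℂ) • M).PosSemidef := by
  rw [posSemidef_iff_dotProduct_mulVec]
  constructor
  · show ((r : ℂ) • M)ᴴ = (r : ℂ) • M
    rw [conjTranspose_smul, hM.1.eq]
    congr 1
    simp
  · intro x
    rw [Matrix.smul_mulVec, dotProduct_smul, smul_eq_mul]
    exact mul_nonneg (by exact_mod_cast hr) (hM.dotProduct_mulVec_nonneg x)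

lemma psd_smul_one {r : ℝ} (hr : 0 ≤ r) : ((r : ℂ) • (1 : Matrix α α ℂ)).PosSemidef :=
  psd_smul Matrix.PosSemidef.one hr

lemma re_nonneg_of_nonneg {z : ℂ} (h : 0 ≤ z) : 0 ≤ z.re := (Complex.le_def.mp h).1

lemma trace_sq {A Ap K B : Matrix α α ℂ} (hA : A.PosSemidef) (hApH : Apᴴ = Ap)
    (hKA : A * Ap * K = K) (hKA2 : Kᴴ * Ap * A = Kᴴ) :
    2 * (Kᴴ * B).trace.re ≤ (Kᴴ * Ap * K).trace.re + (Bᴴ * A * B).trace.re := by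
  set C := Ap * K - B with hC
  have hE : 0 ≤ (Cᴴ * A * C).trace := by
    rw [trace_mul_cycle]
    exact trace_mul_psd_nonneg (posSemidef_self_mul_conjTranspose C) hA
  have hexp : (Cᴴ * A * C).trace
      = (Kᴴ * Ap * K).trace - (Kᴴ * B).trace - (Bᴴ * K).trace + (Bᴴ * A * B).trace := by
    rw [hC, sq_expand hApH hKA hKA2, trace_add, trace_sub, trace_sub]
  have hBK : (Bᴴ * K).trace = star ((Kᴴ * B).trace) := by
    rw [show Bᴴ * K = (Kᴴ * B)ᴴ by rw [conjTranspose_mul, conjTranspose_conjTranspose],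
      trace_conjTranspose]
  have hre := re_nonneg_of_nonneg hE
  rw [hexp, hBK] at hre
  simp only [Complex.add_re, Complex.sub_re, Complex.star_def, Complex.conj_re] at hre
  linarith

end Helpers

/-- A positive map `φ` satisfies `Tr[Kᴴ X⁺ K] ≥ Tr[φ*(K)ᴴ φ*(X)⁺ φ*(K)]` whenever
`ker X ⊆ ker Kᴴ` iff `φ` satisfies the Schwarz inequality. -/
theorem tracial_ineq_iff_schwarz {n m : ℕ}
    (φ : Matrix (Fin n) (Fin n) ℂ →ₗ[ℂ] Matrix (Fin m) (Fin m) ℂ)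
    (hφ : ∀ X : Matrix (Fin n) (Fin n) ℂ, X.PosSemidef → (φ X).PosSemidef)
    (ψ : Matrix (Fin m) (Fin m) ℂ →ₗ[ℂ] Matrix (Fin n) (Fin n) ℂ)
    (hadj : ∀ (A : Matrix (Fin m) (Fin m) ℂ) (B : Matrix (Fin n) (Fin n) ℂ),
      (Aᴴ * φ B).trace = ((ψ A)ᴴ * B).trace) :
    (∀ (K X : Matrix (Fin m) (Fin m) ℂ)
        (Xp : Matrix (Fin m) (Fin m) ℂ) (ψXp : Matrix (Fin n) (Fin n) ℂ),
        X.PosSemidef →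
        LinearMap.ker X.mulVecLin ≤ LinearMap.ker Kᴴ.mulVecLin →
        IsMoorePenroseInv X Xp → IsMoorePenroseInv (ψ X) ψXp →
        ((ψ K)ᴴ * ψXp * ψ K).trace.re ≤ (Kᴴ * Xp * K).trace.re) ↔
      (∀ A : Matrix (Fin n) (Fin n) ℂ,
        (φ (Aᴴ * A) - (φ A)ᴴ * φ A).PosSemidef) := by
  classical
  have φconj : ∀ A, φ Aᴴ = (φ A)ᴴ := by
    intro A
    obtain ⟨P₁, P₂, P₃, P₄, h1, h2, h3, h4, hd⟩ := mat_decomp A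
    have hAH : Aᴴ = P₁ - P₂ - Complex.I • (P₃ - P₄) := by
      rw [hd, conjTranspose_add, conjTranspose_sub, conjTranspose_smul, conjTranspose_sub,
        h1.1.eq, h2.1.eq, h3.1.eq, h4.1.eq,
        show star Complex.I = -Complex.I by simp, neg_smul]
      abel
    have hl : φ Aᴴ = φ P₁ - φ P₂ - Complex.I • (φ P₃ - φ P₄) := by
      rw [hAH]
      simp only [map_sub, _root_.map_smul]
    have hr : (φ A)ᴴ = φ P₁ - φ P₂ - Complex.I • (φ P₃ - φ P₄) := by
      rw [hd]
      simp only [map_add, map_sub, _root_.map_smul]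
      rw [conjTranspose_add, conjTranspose_sub, conjTranspose_smul, conjTranspose_sub,
        (hφ _ h1).1.eq, (hφ _ h2).1.eq, (hφ _ h3).1.eq, (hφ _ h4).1.eq,
        show star Complex.I = -Complex.I by simp, neg_smul]
      abel
    rw [hl, hr]
  have ψconj : ∀ A, ψ Aᴴ = (ψ A)ᴴ := by
    intro A
    refine eq_of_trace_pairing fun B => ?_
    have e1 : ((ψ Aᴴ)ᴴ * B).trace = (A * φ B).trace := by
      rw [← hadj Aᴴ B, conjTranspose_conjTranspose]
    have e2 : (((ψ A)ᴴ)ᴴ * B).trace = (A * φ B).trace := by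
      rw [conjTranspose_conjTranspose]
      calc (ψ A * B).trace = star (((ψ A * B)ᴴ).trace) := by
            rw [trace_conjTranspose, star_star]
      _ = star (((ψ A)ᴴ * Bᴴ).trace) := by rw [conjTranspose_mul, trace_mul_comm]
      _ = star ((Aᴴ * φ Bᴴ).trace) := by rw [hadj A Bᴴ]
      _ = star ((Aᴴ * (φ B)ᴴ).trace) := by rw [φconj]
      _ = star (((φ B * A)ᴴ).trace) := by rw [conjTranspose_mul]
      _ = (φ B * A).trace := by rw [trace_conjTranspose, star_star]
      _ = (A * φ B).trace := trace_mul_comm _ _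
    rw [e1, e2]
  have ψpos : ∀ X, X.PosSemidef → (ψ X).PosSemidef := by
    intro X hX
    have hherm : (ψ X).IsHermitian := by
      show (ψ X)ᴴ = ψ X
      rw [← ψconj, hX.1.eq]
    refine posSemidef_iff_dotProduct_mulVec.mpr ⟨hherm, fun v => ?_⟩
    have h1 : star v ⬝ᵥ (ψ X) *ᵥ v = ((ψ X)ᴴ * vecMulVec v (star v)).trace := by
      rw [hherm.eq, trace_mul_outer]
    rw [h1, ← hadj X _, hX.1.eq]
    exact trace_mul_psd_nonneg hX (hφ _ (posSemidef_outer v))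
  constructor
  · -- trace inequality implies Schwarz
    intro hT A
    set D := φ (Aᴴ * A) - (φ A)ᴴ * φ A with hDdef
    have hDherm : D.IsHermitian :=
      ((hφ _ (posSemidef_conjTranspose_mul_self A)).1).sub
        ((posSemidef_conjTranspose_mul_self (φ A)).1)
    refine posSemidef_iff_dotProduct_mulVec.mpr ⟨hDherm, fun v => ?_⟩
    set ρ := vecMulVec v (star v) with hρdef
    have hρpsd : ρ.PosSemidef := posSemidef_outer v
    -- the per-ε inequality
    have key : ∀ ε : ℝ, 0 < ε → 0 ≤ (ρ * D).trace.re + ε * D.trace.re := by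
      intro ε hε
      set X := ρ + (ε : ℂ) • 1 with hXdef
      have hXpsd : X.PosSemidef := hρpsd.add (psd_smul_one hε.le)
      set B := φ Aᴴ with hBdef
      set K := X * B with hKdef
      have hKH : Kᴴ = Bᴴ * X := by rw [hKdef, conjTranspose_mul, hXpsd.1.eq]
      have hkerK : ∀ u, X *ᵥ u = 0 → Kᴴ *ᵥ u = 0 := by
        intro u hu
        rw [hKH, ← Matrix.mulVec_mulVec, hu, Matrix.mulVec_zero]
      obtain ⟨Xp, hXp⟩ : ∃ Y, IsMoorePenroseInv X Y := ⟨_, matFun_isMP hXpsd.1⟩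
      have hQpsd : (ψ X).PosSemidef := ψpos X hXpsd
      obtain ⟨P, hP⟩ : ∃ Y, IsMoorePenroseInv (ψ X) Y := ⟨_, matFun_isMP hQpsd.1⟩
      have hPH : Pᴴ = P := (mp_inv_posSemidef hQpsd hP).1.eq
      -- kernel condition downstairs
      have hkerQ : ∀ u, (ψ X) *ᵥ u = 0 → (ψ K)ᴴ *ᵥ u = 0 := by
        intro u hu
        have hY : ∀ Y : Matrix (Fin m) (Fin m) ℂ, Y.PosSemidef → ψ Y *ᵥ u = 0 := by
          intro Y hYpsd
          obtain ⟨c, hc, hcY⟩ := psd_le_smul_one hYpsd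
          have hsplit : ((c / ε : ℝ) : ℂ) • X - Y
              = ((c / ε : ℝ) : ℂ) • ρ + ((c : ℂ) • 1 - Y) := by
            rw [hXdef, smul_add, smul_smul,
              show ((c / ε : ℝ) : ℂ) * (ε : ℂ) = (c : ℂ) by
                push_cast; field_simp]
            abel
          have hkey : (((c / ε : ℝ) : ℂ) • X - Y).PosSemidef := by
            rw [hsplit]
            exact (psd_smul hρpsd (div_nonneg hc hε.le)).add hcY
          have h1 : 0 ≤ star u ⬝ᵥ (ψ Y) *ᵥ u := (ψpos Y hYpsd).dotProduct_mulVec_nonneg u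
          have h2 : 0 ≤ star u ⬝ᵥ (ψ (((c / ε : ℝ) : ℂ) • X - Y)) *ᵥ u :=
            (ψpos _ hkey).dotProduct_mulVec_nonneg u
          have h3 : star u ⬝ᵥ (ψ (((c / ε : ℝ) : ℂ) • X - Y)) *ᵥ u
              = -(star u ⬝ᵥ (ψ Y) *ᵥ u) := by
            rw [map_sub, _root_.map_smul, Matrix.sub_mulVec, Matrix.smul_mulVec, hu,
              smul_zero, zero_sub, dotProduct_neg]
          rw [h3] at h2
          have h4 : star u ⬝ᵥ (ψ Y) *ᵥ u = 0 := le_antisymm (neg_nonneg.mp h2) h1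
          exact ((ψpos Y hYpsd).dotProduct_mulVec_zero_iff u).mp h4
        obtain ⟨P₁, P₂, P₃, P₄, h1, h2, h3, h4, hd⟩ := mat_decomp Kᴴ
        rw [← ψconj, hd, map_add, map_sub, _root_.map_smul, map_sub, Matrix.add_mulVec,
          Matrix.sub_mulVec, Matrix.smul_mulVec, Matrix.sub_mulVec,
          hY P₁ h1, hY P₂ h2, hY P₃ h3, hY P₄ h4]
        simp
      obtain ⟨hKA2, hKA1'⟩ := proj_fact hP hkerQ
      have hQP : (ψ X) * P = P * (ψ X) := by
        rw [show (ψ X) * P = (ψ X)ᴴ * Pᴴ by rw [hQpsd.1.eq, hPH], ← conjTranspose_mul,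
          hP.2.2.2]
      have hKA1 : (ψ X) * P * (ψ K) = ψ K := by rw [hQP]; exact hKA1'
      -- apply the hypothesis
      have hmain := hT K X Xp P hXpsd
        (by
          intro u hu
          rw [LinearMap.mem_ker, Matrix.mulVecLin_apply] at hu ⊢
          exact hkerK u hu)
        hXp hP
      -- RHS of hmain
      have hRHS : Kᴴ * Xp * K = Bᴴ * X * B := by
        calc Kᴴ * Xp * K = Bᴴ * X * Xp * (X * B) := by rw [hKH, hKdef]
        _ = Bᴴ * (X * Xp * X) * B := by noncomm_ring
        _ = Bᴴ * X * B := by rw [hXp.1]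
      -- lower bound for LHS of hmain via trace_sq with test matrix Aᴴ
      have hsq := trace_sq (A := ψ X) (Ap := P) (K := ψ K) (B := Aᴴ) hQpsd hPH hKA1 hKA2
      -- identify the traces
      have e1 : ((ψ K)ᴴ * Aᴴ).trace = (Bᴴ * X * B).trace := by
        calc ((ψ K)ᴴ * Aᴴ).trace = (Kᴴ * φ Aᴴ).trace := (hadj K Aᴴ).symm
        _ = (Bᴴ * X * B).trace := by rw [← hBdef, hKH, Matrix.mul_assoc]
      have e2 : ((Aᴴ)ᴴ * (ψ X) * Aᴴ).trace = (X * φ (Aᴴ * A)).trace := by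
        calc ((Aᴴ)ᴴ * (ψ X) * Aᴴ).trace = (Aᴴ * (Aᴴ)ᴴ * (ψ X)).trace :=
              trace_mul_cycle _ _ _
        _ = ((Aᴴ * A) * (ψ X)).trace := by rw [conjTranspose_conjTranspose]
        _ = ((ψ X) * (Aᴴ * A)).trace := trace_mul_comm _ _
        _ = ((ψ X)ᴴ * (Aᴴ * A)).trace := by rw [hQpsd.1.eq]
        _ = (Xᴴ * φ (Aᴴ * A)).trace := (hadj X (Aᴴ * A)).symm
        _ = (X * φ (Aᴴ * A)).trace := by rw [hXpsd.1.eq]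
      have e3 : (Bᴴ * X * B).trace = (X * ((φ A)ᴴ * φ A)).trace := by
        calc (Bᴴ * X * B).trace = (B * Bᴴ * X).trace := trace_mul_cycle _ _ _
        _ = (X * (B * Bᴴ)).trace := trace_mul_comm _ _
        _ = (X * ((φ A)ᴴ * φ A)).trace := by
              rw [hBdef, φconj, conjTranspose_conjTranspose]
      have e1' := congrArg Complex.re e1
      have e2' := congrArg Complex.re e2
      have e3' := congrArg Complex.re e3
      have hRHS' : (Kᴴ * Xp * K).trace.re = (Bᴴ * X * B).trace.re := by rw [hRHS]
      -- from hsq and hmain : s ≤ T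
      have hfin : (X * ((φ A)ᴴ * φ A)).trace.re ≤ (X * φ (Aᴴ * A)).trace.re := by
        linarith
      -- unfold X
      have hXD : (X * φ (Aᴴ * A)).trace.re - (X * ((φ A)ᴴ * φ A)).trace.re
          = (ρ * D).trace.re + ε * D.trace.re := by
        rw [hXdef, hDdef]
        simp only [Matrix.add_mul, Matrix.mul_sub, Matrix.smul_mul, Matrix.one_mul, trace_add,
          trace_sub, trace_smul, smul_eq_mul, Complex.add_re, Complex.sub_re, Complex.mul_re,
          Complex.ofReal_re, Complex.ofReal_im]
        ring
      linarith
    -- conclude from the per-ε inequality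
    have hre : 0 ≤ (ρ * D).trace.re := by
      by_contra hneg
      push_neg at hneg
      rcases le_or_gt D.trace.re 0 with hc | hc
      · have := key 1 one_pos
        nlinarith
      · have hεpos : 0 < -(ρ * D).trace.re / (2 * D.trace.re) :=
          div_pos (by linarith) (by linarith)
        have := key _ hεpos
        have h2 : -(ρ * D).trace.re / (2 * D.trace.re) * D.trace.re
            = -(ρ * D).trace.re / 2 := by field_simp
        rw [h2] at this
        linarith
    have him : (D * ρ).trace.im = 0 := by
      have hstar : star ((D * ρ).trace) = (D * ρ).trace := by
        calc star ((D * ρ).trace) = ((D * ρ)ᴴ).trace := (trace_conjTranspose _).symm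
        _ = (ρᴴ * Dᴴ).trace := by rw [conjTranspose_mul]
        _ = (ρ * D).trace := by rw [hρpsd.1.eq, hDherm.eq]
        _ = (D * ρ).trace := trace_mul_comm _ _
      have := congrArg Complex.im hstar
      simp only [Complex.star_def, Complex.conj_im] at this
      linarith
    have hz : star v ⬝ᵥ D *ᵥ v = (D * ρ).trace := (trace_mul_outer D v).symm
    rw [hz, Complex.nonneg_iff]
    exact ⟨by rw [trace_mul_comm]; exact hre, him.symm⟩
  · -- Schwarz implies trace inequality
    intro hS K X Xp ψXp hX hker hXp hψXp
    have hXpH : Xpᴴ = Xp := (mp_inv_posSemidef hX hXp).1.eq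
    have hQpsd : (ψ X).PosSemidef := ψpos X hX
    have hPH : ψXpᴴ = ψXp := (mp_inv_posSemidef hQpsd hψXp).1.eq
    have hker' : ∀ u, X *ᵥ u = 0 → Kᴴ *ᵥ u = 0 := by
      intro u hu
      have h1 : u ∈ LinearMap.ker X.mulVecLin := by
        rw [LinearMap.mem_ker, Matrix.mulVecLin_apply]; exact hu
      have := hker h1
      rwa [LinearMap.mem_ker, Matrix.mulVecLin_apply] at this
    obtain ⟨hK2, hK1'⟩ := proj_fact hXp hker'
    have hXXp : X * Xp = Xp * X := by
      rw [show X * Xp = Xᴴ * Xpᴴ by rw [hX.1.eq, hXpH], ← conjTranspose_mul, hXp.2.2.2]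
    have hK1 : X * Xp * K = K := by rw [hXXp]; exact hK1'
    set K' := ψ K with hK'def
    set A₀ := ψXp * K' with hA₀def
    set B := φ A₀ with hBdef
    -- step alpha : LHS trace = (Kᴴ * B).trace
    have eα : (K'ᴴ * ψXp * K').trace = (Kᴴ * B).trace := by
      rw [hadj K A₀, ← hK'def, hA₀def, Matrix.mul_assoc]
    -- step beta : LHS trace = (X * φ (A₀ * A₀ᴴ)).trace
    have eβ : (K'ᴴ * ψXp * K').trace = (X * φ (A₀ * A₀ᴴ)).trace := by
      have hmat : A₀ᴴ * (ψ X) * A₀ = K'ᴴ * ψXp * K' := by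
        calc A₀ᴴ * (ψ X) * A₀ = (K'ᴴ * ψXp) * (ψ X) * (ψXp * K') := by
              rw [hA₀def, conjTranspose_mul, hPH]
        _ = K'ᴴ * (ψXp * ψ X * ψXp) * K' := by noncomm_ring
        _ = K'ᴴ * ψXp * K' := by rw [hψXp.2.1]
      calc (K'ᴴ * ψXp * K').trace = (A₀ᴴ * ψ X * A₀).trace := by rw [hmat]
      _ = (A₀ * A₀ᴴ * ψ X).trace := trace_mul_cycle _ _ _
      _ = (ψ X * (A₀ * A₀ᴴ)).trace := trace_mul_comm _ _
      _ = ((ψ X)ᴴ * (A₀ * A₀ᴴ)).trace := by rw [hQpsd.1.eq]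
      _ = (Xᴴ * φ (A₀ * A₀ᴴ)).trace := (hadj X (A₀ * A₀ᴴ)).symm
      _ = (X * φ (A₀ * A₀ᴴ)).trace := by rw [hX.1.eq]
    -- Schwarz step
    have hSA := hS A₀ᴴ
    rw [conjTranspose_conjTranspose, φconj, ← hBdef, conjTranspose_conjTranspose] at hSA
    have eγ : (X * (B * Bᴴ)).trace.re ≤ (X * φ (A₀ * A₀ᴴ)).trace.re := by
      have h0 : 0 ≤ (X * (φ (A₀ * A₀ᴴ) - B * Bᴴ)).trace := trace_mul_psd_nonneg hX hSA
      have hre := re_nonneg_of_nonneg h0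
      rw [Matrix.mul_sub, trace_sub, Complex.sub_re] at hre
      linarith
    -- complete the square upstairs
    have hsq := trace_sq (A := X) (Ap := Xp) (K := K) (B := B) hX hXpH hK1 hK2
    have e3 : (Bᴴ * X * B).trace = (X * (B * Bᴴ)).trace := by
      calc (Bᴴ * X * B).trace = (B * Bᴴ * X).trace := trace_mul_cycle _ _ _
      _ = (X * (B * Bᴴ)).trace := trace_mul_comm _ _
    rw [e3] at hsq
    -- combine everything
    have ha : (K'ᴴ * ψXp * K').trace.re = (Kᴴ * B).trace.re := by rw [eα]
    have hb : (K'ᴴ * ψXp * K').trace.re = (X * φ (A₀ * A₀ᴴ)).trace.re := by rw [eβ]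
    linarith
end

section
/- Let φ: M_n → M_m be a positive linear map and X ∈ M_m positive semidefinite. If ker(R_X) ⊆ ker(φ*) on M_m (with R_X(K) = KX), then ker(R_{φ*(X)}) ⊆ ker(φ) on M_n, i.e., K φ*(X) = 0 implies φ(K) = 0 for K ∈ M_n. -/
open Matrix ComplexOrder Complex

section KerAux

variable {k l m : ℕ}


lemma trace_faithful (M : Matrix (Fin k) (Fin l) ℂ) (h : (Mᴴ * M).trace = 0) : M = 0 := by
  have key : ∑ j, ∑ i, star (M i j) * M i j = 0 := by
    simpa [Matrix.trace, Matrix.mul_apply, Matrix.diag, Matrix.conjTranspose_apply] using h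
  rw [Finset.sum_eq_zero_iff_of_nonneg (fun j _ => Finset.sum_nonneg fun i _ => star_mul_self_nonneg _)] at key
  ext i j
  have := key j (Finset.mem_univ j)
  rw [Finset.sum_eq_zero_iff_of_nonneg (fun i _ => star_mul_self_nonneg _)] at this
  have h0 := this i (Finset.mem_univ i)
  rw [RCLike.star_def, mul_comm, Complex.mul_conj] at h0
  exact_mod_cast Complex.normSq_eq_zero.mp (by exact_mod_cast h0)

lemma quad_eq_trace (M : Matrix (Fin k) (Fin k) ℂ) (x : Fin k → ℂ) :
    star x ⬝ᵥ M *ᵥ x = (M * vecMulVec x (star x)).trace := by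
  simp only [dotProduct, Matrix.mulVec, Matrix.trace, Matrix.diag, Matrix.mul_apply,
    vecMulVec_apply, Pi.star_apply, Finset.mul_sum]
  refine Finset.sum_congr rfl fun i _ => Finset.sum_congr rfl fun j _ => ?_
  ring

lemma mul_vecMulVec (M : Matrix (Fin k) (Fin k) ℂ) (a b : Fin k → ℂ) :
    M * vecMulVec a b = vecMulVec (M *ᵥ a) b := by
  ext i j
  simp [Matrix.mul_apply, vecMulVec_apply, Matrix.mulVec, dotProduct, Finset.sum_mul, mul_assoc]

lemma vecMulVec_mul (a b : Fin k → ℂ) (M : Matrix (Fin k) (Fin k) ℂ) :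
    vecMulVec a b * M = vecMulVec a (b ᵥ* M) := by
  ext i j
  simp [Matrix.mul_apply, vecMulVec_apply, Matrix.vecMul, dotProduct, Finset.mul_sum, mul_assoc]

lemma outer_quad (a x : Fin k → ℂ) :
    star x ⬝ᵥ (vecMulVec a (star a)) *ᵥ x = star (star a ⬝ᵥ x) * (star a ⬝ᵥ x) := by
  simp only [vecMulVec_apply, dotProduct, Matrix.mulVec, Pi.star_apply, star_sum, star_mul',
    star_star, Finset.mul_sum, Finset.sum_mul]
  rw [Finset.sum_comm]
  refine Finset.sum_congr rfl fun i _ => Finset.sum_congr rfl fun j _ => ?_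
  ring

lemma posSemidef_outer_s16 (a : Fin k → ℂ) : (vecMulVec a (star a)).PosSemidef := by
  refine posSemidef_iff_dotProduct_mulVec.mpr ⟨?_, ?_⟩
  · ext i j; simp [vecMulVec_apply, Matrix.conjTranspose_apply, mul_comm]
  · intro x
    rw [outer_quad]
    exact star_mul_self_nonneg _

lemma colMulVec_eq (M N : Matrix (Fin k) (Fin k) ℂ) (j : Fin k) :
    M *ᵥ (fun p => N p j) = fun i => (M * N) i j := by
  funext i; simp [Matrix.mul_apply, Matrix.mulVec, dotProduct]



lemma herm_decomp_s16 {H : Matrix (Fin k) (Fin k) ℂ} (hH : H.IsHermitian) :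
    ∃ P N : Matrix (Fin k) (Fin k) ℂ, P.PosSemidef ∧ N.PosSemidef ∧ H = P - N := by
  let U : Matrix (Fin k) (Fin k) ℂ := hH.eigenvectorUnitary
  let e := hH.eigenvalues
  refine ⟨U * diagonal (fun i => ((max (e i) 0 : ℝ) : ℂ)) * star U,
         U * diagonal (fun i => ((max (-(e i)) 0 : ℝ) : ℂ)) * star U, ?_, ?_, ?_⟩
  · exact (posSemidef_diagonal_iff.mpr (fun i => by positivity)).mul_mul_conjTranspose_same U
  · exact (posSemidef_diagonal_iff.mpr (fun i => by positivity)).mul_mul_conjTranspose_same U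
  · have hd : diagonal (fun i => ((max (e i) 0 : ℝ) : ℂ)) - diagonal (fun i => ((max (-(e i)) 0 : ℝ) : ℂ))
        = diagonal (RCLike.ofReal ∘ e) := by
      rw [diagonal_sub]
      refine congrArg diagonal (funext fun i => ?_)
      show ((max (e i) 0 : ℝ) : ℂ) - ((max (-(e i)) 0 : ℝ) : ℂ) = ((e i : ℝ) : ℂ)
      rw [← Complex.ofReal_sub]
      congr 1
      rcases le_total (e i) 0 with h | h
      · rw [max_eq_right h, max_eq_left (neg_nonneg.mpr h)]; ring
      · rw [max_eq_left h, max_eq_right (neg_nonpos.mpr h)]; ring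
    calc H = U * diagonal (RCLike.ofReal ∘ e) * star U := hH.spectral_theorem
    _ = _ := by rw [← hd, Matrix.mul_sub, Matrix.sub_mul]


section Maps

variable {n m : ℕ} (φ : Matrix (Fin n) (Fin n) ℂ →ₗ[ℂ] Matrix (Fin m) (Fin m) ℂ)
  (hφ : ∀ X : Matrix (Fin n) (Fin n) ℂ, X.PosSemidef → (φ X).PosSemidef)

include hφ in
lemma phi_herm (M : Matrix (Fin n) (Fin n) ℂ) : φ Mᴴ = (φ M)ᴴ := by
  have hHerm : ∀ H : Matrix (Fin n) (Fin n) ℂ, H.IsHermitian → (φ H).IsHermitian := by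
    intro H hH
    obtain ⟨P, N, hP, hN, rfl⟩ := herm_decomp_s16 hH
    rw [map_sub]
    exact (hφ P hP).isHermitian.sub (hφ N hN).isHermitian
  set Hr : Matrix (Fin n) (Fin n) ℂ := M + Mᴴ with hHr
  set Hi : Matrix (Fin n) (Fin n) ℂ := (I : ℂ) • (M - Mᴴ) with hHi
  have hr : Hr.IsHermitian := by
    unfold Hr; rw [Matrix.IsHermitian]; rw [conjTranspose_add, conjTranspose_conjTranspose, add_comm]
  have hi : Hi.IsHermitian := by
    unfold Hi
    rw [Matrix.IsHermitian, conjTranspose_smul, conjTranspose_sub, conjTranspose_conjTranspose]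
    rw [RCLike.star_def, Complex.conj_I, neg_smul, ← smul_neg, neg_sub]
  have hM : M = ((1:ℂ)/2) • Hr + (-(I/2)) • Hi := by
    unfold Hr Hi
    rw [smul_smul]
    ring_nf
    rw [Complex.I_sq]
    module
  have hMH : Mᴴ = ((1:ℂ)/2) • Hr + (I/2) • Hi := by
    unfold Hr Hi
    rw [smul_smul]
    ring_nf
    rw [Complex.I_sq]
    module
  rw [hMH]
  conv_rhs => rw [hM]
  rw [map_add, map_add, _root_.map_smul, _root_.map_smul, _root_.map_smul, _root_.map_smul, conjTranspose_add,
    conjTranspose_smul, conjTranspose_smul, (hHerm Hr hr).eq, (hHerm Hi hi).eq]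
  congr 1
  · congr 1; simp
  · rw [hHi, _root_.map_smul]
    congr 1
    simp [RCLike.star_def]
    ring


end Maps

lemma psd_trace_nonneg {M : Matrix (Fin k) (Fin k) ℂ} (hM : M.PosSemidef) : 0 ≤ M.trace := by
  apply Finset.sum_nonneg
  intro i _
  have h := hM.dotProduct_mulVec_nonneg (Pi.single i 1)
  have e : star (Pi.single i 1 : Fin k → ℂ) ⬝ᵥ M *ᵥ Pi.single i 1 = M i i := by
    simp [dotProduct, Matrix.mulVec_single, Pi.single_apply, apply_ite, Finset.sum_ite_eq]
  rwa [e] at h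

lemma eq_of_trace_right (M N : Matrix (Fin k) (Fin l) ℂ)
    (h : ∀ D : Matrix (Fin l) (Fin k) ℂ, (M * D).trace = (N * D).trace) : M = N := by
  have h0 : ((M - N) * (M - N)ᴴ).trace = 0 := by
    rw [Matrix.sub_mul, Matrix.trace_sub, h (M - N)ᴴ, sub_self]
  have h1 : (M - N)ᴴ = 0 := by
    apply trace_faithful
    rwa [conjTranspose_conjTranspose]
  have h2 := congrArg conjTranspose h1
  rwa [conjTranspose_conjTranspose, conjTranspose_zero, sub_eq_zero] at h2

variable {n m : ℕ}

variable (φ : Matrix (Fin n) (Fin n) ℂ →ₗ[ℂ] Matrix (Fin m) (Fin m) ℂ)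
  (hφ : ∀ X : Matrix (Fin n) (Fin n) ℂ, X.PosSemidef → (φ X).PosSemidef)
  (ψ : Matrix (Fin m) (Fin m) ℂ →ₗ[ℂ] Matrix (Fin n) (Fin n) ℂ)
  (hadj : ∀ (A : Matrix (Fin m) (Fin m) ℂ) (B : Matrix (Fin n) (Fin n) ℂ),
      (Aᴴ * φ B).trace = ((ψ A)ᴴ * B).trace)

include hφ hadj in
lemma key_trace (A : Matrix (Fin m) (Fin m) ℂ) (D : Matrix (Fin n) (Fin n) ℂ) :
    (ψ A * D).trace = (A * φ D).trace := by
  have h1 := congrArg star (hadj A Dᴴ)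
  rw [← trace_conjTranspose, ← trace_conjTranspose, conjTranspose_mul, conjTranspose_mul,
    conjTranspose_conjTranspose, conjTranspose_conjTranspose, ← phi_herm φ hφ,
    conjTranspose_conjTranspose, trace_mul_comm] at h1
  rw [h1, trace_mul_comm, conjTranspose_conjTranspose]

include hφ hadj in
lemma psi_herm (A : Matrix (Fin m) (Fin m) ℂ) : ψ Aᴴ = (ψ A)ᴴ := by
  apply eq_of_trace_right
  intro D
  rw [key_trace φ hφ ψ hadj]
  exact hadj A D
  
include hφ hadj in
lemma psi_pos {C : Matrix (Fin m) (Fin m) ℂ} (hC : C.PosSemidef) : (ψ C).PosSemidef := by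
  refine posSemidef_iff_dotProduct_mulVec.mpr ⟨?_, ?_⟩
  · show (ψ C)ᴴ = ψ C
    rw [← psi_herm φ hφ ψ hadj, hC.1.eq]
  · intro x
    rw [quad_eq_trace, key_trace φ hφ ψ hadj]
    open scoped MatrixOrder in obtain ⟨B, rfl⟩ := CStarAlgebra.nonneg_iff_eq_star_mul_self.mp hC.nonneg
    rw [trace_mul_cycle, trace_mul_cycle]
    exact psd_trace_nonneg (((hφ _ (posSemidef_outer_s16 x)).mul_mul_conjTranspose_same B))

lemma diag_psd_core (e : Fin m → ℝ) (he : ∀ i, 0 ≤ e i) (u : Fin m → ℂ)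
    (hu : ∀ i, e i = 0 → u i = 0) :
    (((∑ i, ‖u i‖^2 / e i : ℝ) : ℂ) • diagonal (RCLike.ofReal ∘ e)
      - vecMulVec u (star u)).PosSemidef := by
  set c : ℝ := ∑ i, ‖u i‖^2 / e i with hc
  have hc0 : 0 ≤ c := Finset.sum_nonneg fun i _ => div_nonneg (by positivity) (he i)
  refine posSemidef_iff_dotProduct_mulVec.mpr ⟨?_, ?_⟩
  · apply IsHermitian.sub
    · have hfun : star (RCLike.ofReal ∘ e : Fin m → ℂ) = RCLike.ofReal ∘ e := by
        funext i; simp [RCLike.star_def, Complex.conj_ofReal]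
      have hd : (diagonal (RCLike.ofReal ∘ e) : Matrix (Fin m) (Fin m) ℂ)ᴴ
          = diagonal (RCLike.ofReal ∘ e) := by
        rw [diagonal_conjTranspose, hfun]
      rw [IsHermitian, conjTranspose_smul, hd, RCLike.star_def, Complex.conj_ofReal]
    · exact (posSemidef_outer_s16 u).1
  · intro x
    rw [sub_mulVec, dotProduct_sub, outer_quad]
    have q1 : star x ⬝ᵥ ((c:ℂ) • diagonal (RCLike.ofReal ∘ e)) *ᵥ x
        = ((c * ∑ i, e i * ‖x i‖^2 : ℝ) : ℂ) := by
      rw [smul_mulVec, dotProduct_smul]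
      have : star x ⬝ᵥ (diagonal (RCLike.ofReal ∘ e)) *ᵥ x = ((∑ i, e i * ‖x i‖^2 : ℝ) : ℂ) := by
        push_cast
        rw [dotProduct]
        refine Finset.sum_congr rfl fun i _ => ?_
        rw [mulVec_diagonal]
        simp only [Pi.star_apply, Function.comp_apply, RCLike.star_def]
        rw [mul_comm ((starRingEnd ℂ) (x i)), mul_assoc, mul_conj']
        push_cast
        rfl
      rw [this, smul_eq_mul]
      norm_cast
    have q2 : star (star u ⬝ᵥ x) * (star u ⬝ᵥ x) = ((‖star u ⬝ᵥ x‖^2 : ℝ) : ℂ) := by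
      rw [RCLike.star_def, mul_comm, mul_conj']
      norm_cast
    rw [q1, q2, ← Complex.ofReal_sub]
    rw [Complex.zero_le_real]
    rw [sub_nonneg]
    -- real Cauchy-Schwarz
    set s := star u ⬝ᵥ x
    have habs : ‖s‖ ≤ ∑ i, (‖u i‖ / Real.sqrt (e i)) * (Real.sqrt (e i) * ‖x i‖) := by
      refine (norm_sum_le _ _).trans ?_
      refine Finset.sum_le_sum fun i _ => ?_
      rcases eq_or_ne (e i) 0 with h0 | h0
      · simp [hu i h0]
      · have hs : Real.sqrt (e i) ≠ 0 := Real.sqrt_ne_zero'.mpr (lt_of_le_of_ne (he i) (Ne.symm h0))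
        have hr : (‖u i‖ / Real.sqrt (e i)) * (Real.sqrt (e i) * ‖x i‖)
            = ‖u i‖ * ‖x i‖ * (Real.sqrt (e i) / Real.sqrt (e i)) := by ring
        rw [hr, div_self hs, mul_one]
        simp [norm_mul]
    have hcs := Finset.sum_mul_sq_le_sq_mul_sq Finset.univ
      (fun i => ‖u i‖ / Real.sqrt (e i)) (fun i => Real.sqrt (e i) * ‖x i‖)
    have hf2 : ∑ i, (‖u i‖ / Real.sqrt (e i))^2 = c := by
      refine Finset.sum_congr rfl fun i _ => ?_
      rw [div_pow, Real.sq_sqrt (he i)]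
    have hg2 : ∑ i, (Real.sqrt (e i) * ‖x i‖)^2 = ∑ i, e i * ‖x i‖^2 := by
      refine Finset.sum_congr rfl fun i _ => ?_
      rw [mul_pow, Real.sq_sqrt (he i)]
    calc ‖s‖^2 ≤ (∑ i, (‖u i‖ / Real.sqrt (e i)) * (Real.sqrt (e i) * ‖x i‖))^2 := by
          apply pow_le_pow_left₀ (norm_nonneg s) habs
      _ ≤ (∑ i, (‖u i‖ / Real.sqrt (e i))^2) * ∑ i, (Real.sqrt (e i) * ‖x i‖)^2 := hcs
      _ = c * ∑ i, e i * ‖x i‖^2 := by rw [hf2, hg2]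

lemma support_proj {X : Matrix (Fin m) (Fin m) ℂ} (hX : X.PosSemidef) :
    ∃ P : Matrix (Fin m) (Fin m) ℂ, Pᴴ = P ∧ P * X = X ∧
      ∀ v : Fin m → ℂ, ∃ c : ℝ, ((c:ℂ) • X - vecMulVec (P *ᵥ v) (star (P *ᵥ v))).PosSemidef := by
  set U : Matrix (Fin m) (Fin m) ℂ := (hX.1.eigenvectorUnitary : Matrix (Fin m) (Fin m) ℂ) with hUdef
  set e : Fin m → ℝ := hX.1.eigenvalues with hedef
  have he : ∀ i, 0 ≤ e i := hX.eigenvalues_nonneg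
  have hUU : star U * U = 1 := mem_unitaryGroup_iff'.mp hX.1.eigenvectorUnitary.2
  have hUU' : U * star U = 1 := mem_unitaryGroup_iff.mp hX.1.eigenvectorUnitary.2
  have hs : X = U * diagonal (RCLike.ofReal ∘ e) * star U := hX.1.spectral_theorem
  set g : Fin m → ℂ := fun i => if e i = 0 then 0 else 1 with hgdef
  refine ⟨U * diagonal g * star U, ?_, ?_, ?_⟩
  · have hg : star g = g := by
      funext i
      simp only [hgdef, Pi.star_apply]
      split <;> simp
    rw [conjTranspose_mul, conjTranspose_mul, diagonal_conjTranspose, hg, star_eq_conjTranspose U,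
      conjTranspose_conjTranspose]
    simp only [star_eq_conjTranspose, Matrix.mul_assoc]
  · have hge : diagonal g * diagonal (RCLike.ofReal ∘ e) = diagonal (RCLike.ofReal ∘ e) := by
      rw [diagonal_mul_diagonal]
      refine congrArg diagonal (funext fun i => ?_)
      simp only [hgdef, Function.comp_apply]
      by_cases h : e i = 0
      · simp [h]
      · simp [h]
    calc (U * diagonal g * star U) * X
        = U * (diagonal g * ((star U * U) * (diagonal (RCLike.ofReal ∘ e) * star U))) := by
          rw [hs]; simp only [Matrix.mul_assoc]
      _ = U * ((diagonal g * diagonal (RCLike.ofReal ∘ e)) * star U) := by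
          rw [hUU, Matrix.one_mul, Matrix.mul_assoc]
      _ = U * diagonal (RCLike.ofReal ∘ e) * star U := by rw [hge, Matrix.mul_assoc]
      _ = X := hs.symm
  · intro v
    set u : Fin m → ℂ := fun i => g i * (star U *ᵥ v) i with hudef
    have hu0 : ∀ i, e i = 0 → u i = 0 := by
      intro i h0
      simp [hudef, hgdef, h0]
    refine ⟨∑ i, ‖u i‖^2 / e i, ?_⟩
    have hPv : (U * diagonal g * star U) *ᵥ v = U *ᵥ u := by
      have hdg : diagonal g *ᵥ (star U *ᵥ v) = u := by
        funext i; rw [mulVec_diagonal]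
      rw [← mulVec_mulVec, ← mulVec_mulVec, hdg]
    rw [hPv]
    have houter : vecMulVec (U *ᵥ u) (star (U *ᵥ u)) = U * vecMulVec u (star u) * star U := by
      rw [star_mulVec, mul_vecMulVec, vecMulVec_mul, star_eq_conjTranspose]
    have hsmul : ((∑ i, ‖u i‖^2 / e i : ℝ) : ℂ) • X
        = U * (((∑ i, ‖u i‖^2 / e i : ℝ) : ℂ) • diagonal (RCLike.ofReal ∘ e)) * star U := by
      rw [mul_smul_comm, smul_mul_assoc, ← hs]
    rw [houter, hsmul, ← Matrix.sub_mul, ← Matrix.mul_sub]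
    have hpsd := (diag_psd_core e he u hu0).mul_mul_conjTranspose_same U
    rwa [star_eq_conjTranspose U]

end KerAux

/-- For a positive map `φ` and PSD `X`: if `ker R_X ⊆ ker φ*` on `M_m`,
then `ker R_{φ*(X)} ⊆ ker φ` on `M_n`. -/
theorem ker_rightMul_adjoint_subset_ker {n m : ℕ}
    (φ : Matrix (Fin n) (Fin n) ℂ →ₗ[ℂ] Matrix (Fin m) (Fin m) ℂ)
    (hφ : ∀ X : Matrix (Fin n) (Fin n) ℂ, X.PosSemidef → (φ X).PosSemidef)
    (ψ : Matrix (Fin m) (Fin m) ℂ →ₗ[ℂ] Matrix (Fin n) (Fin n) ℂ)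
    (hadj : ∀ (A : Matrix (Fin m) (Fin m) ℂ) (B : Matrix (Fin n) (Fin n) ℂ),
      (Aᴴ * φ B).trace = ((ψ A)ᴴ * B).trace)
    (X : Matrix (Fin m) (Fin m) ℂ) (hX : X.PosSemidef)
    (h : ∀ K : Matrix (Fin m) (Fin m) ℂ, K * X = 0 → ψ K = 0) :
    ∀ K : Matrix (Fin n) (Fin n) ℂ, K * ψ X = 0 → φ K = 0 := by
  intro K hK
  set Y : Matrix (Fin n) (Fin n) ℂ := ψ X with hYdef
  have hY : Y.PosSemidef := psi_pos φ hφ ψ hadj hX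
  obtain ⟨P, hPH, hPX, hPc⟩ := support_proj hX
  have h1P : (1 - P) * X = 0 := by rw [Matrix.sub_mul, Matrix.one_mul, hPX, sub_self]
  have hYK : Y * Kᴴ = 0 := by
    have := congrArg conjTranspose hK
    rwa [conjTranspose_mul, hY.1.eq, conjTranspose_zero] at this
  -- Step A : rank-one hermitian case
  have stepA : ∀ v : Fin m → ℂ, K * ψ (vecMulVec v (star v)) = 0 := by
    intro v
    set A : Matrix (Fin m) (Fin m) ℂ := vecMulVec v (star v) with hAdef
    have hAH : Aᴴ = A := (posSemidef_outer_s16 v).1.eq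
    set w : Fin m → ℂ := P *ᵥ v with hwdef
    have hPAP : P * A * P = vecMulVec w (star w) := by
      rw [hAdef, mul_vecMulVec, vecMulVec_mul, star_mulVec, hPH]
    have hz1 : ψ (A * (1 - P)) = 0 := by
      apply h
      rw [Matrix.mul_assoc, h1P, Matrix.mul_zero]
    have hz2 : ψ ((1 - P) * A * P) = 0 := by
      have hNX : P * A * (1 - P) * X = 0 := by
        rw [Matrix.mul_assoc, h1P, Matrix.mul_zero]
      have hNψ := h _ hNX
      have hT : (1 - P) * A * P = (P * A * (1 - P))ᴴ := by
        rw [conjTranspose_mul, conjTranspose_mul, hAH, hPH, conjTranspose_sub,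
          conjTranspose_one, hPH, Matrix.mul_assoc]
      rw [hT, psi_herm φ hφ ψ hadj, hNψ, conjTranspose_zero]
    have hsplit : A = P * A * P + A * (1 - P) + (1 - P) * A * P := by noncomm_ring
    have hAw : ψ A = ψ (vecMulVec w (star w)) := by
      conv_lhs => rw [hsplit]
      rw [map_add, map_add, hz1, hz2, add_zero, add_zero, hPAP]
    obtain ⟨c, hc⟩ := hPc v
    set S : Matrix (Fin n) (Fin n) ℂ := ψ (vecMulVec w (star w)) with hSdef
    have hS : S.PosSemidef := psi_pos φ hφ ψ hadj (posSemidef_outer_s16 w)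
    have hT : ((c:ℂ) • Y - S).PosSemidef := by
      have := psi_pos φ hφ ψ hadj hc
      rwa [map_sub, _root_.map_smul] at this
    have hScol : ∀ j : Fin n, S *ᵥ (fun p => Kᴴ p j) = 0 := by
      intro j
      set x : Fin n → ℂ := fun p => Kᴴ p j with hxdef
      have hYx : Y *ᵥ x = 0 := by
        show Y *ᵥ (fun p => Kᴴ p j) = 0
        rw [colMulVec_eq, hYK]
        funext i
        simp
      have hq0 : star x ⬝ᵥ S *ᵥ x = 0 := by
        have hge := hS.dotProduct_mulVec_nonneg x
        have hle : star x ⬝ᵥ S *ᵥ x ≤ 0 := by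
          have h2 := hT.dotProduct_mulVec_nonneg x
          rw [sub_mulVec, dotProduct_sub, smul_mulVec, dotProduct_smul, hYx,
            dotProduct_zero, smul_zero, zero_sub] at h2
          exact neg_nonneg.mp h2
        exact le_antisymm hle hge
      exact (hS.dotProduct_mulVec_zero_iff x).mp hq0
    have hSK : S * Kᴴ = 0 := by
      ext i j
      have h5 := congrFun (hScol j) i
      rw [colMulVec_eq] at h5
      simpa using h5
    have hKS : K * S = 0 := by
      have := congrArg conjTranspose hSK
      rwa [conjTranspose_mul, hS.1.eq, conjTranspose_conjTranspose, conjTranspose_zero] at this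
    rw [hAdef] at hAw
    rw [hAw, hKS]
  -- Step B : all rank-one
  have stepB : ∀ u v : Fin m → ℂ, K * ψ (vecMulVec u (star v)) = 0 := by
    intro u v
    have e1 : vecMulVec (u + v) (star (u + v))
        = vecMulVec u (star u) + (vecMulVec u (star v) + vecMulVec v (star u))
          + vecMulVec v (star v) := by
      ext i j
      simp only [vecMulVec_apply, Pi.add_apply, Pi.star_apply, Matrix.add_apply, star_add]
      ring
    have hab : K * ψ (vecMulVec u (star v)) + K * ψ (vecMulVec v (star u)) = 0 := by
      have hA := stepA (u + v)
      rw [e1] at hA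
      simp only [map_add, Matrix.mul_add, stepA u, stepA v, zero_add, add_zero] at hA
      exact hA
    have e2 : vecMulVec (u + I • v) (star (u + I • v))
        = vecMulVec u (star u) + ((-I) • vecMulVec u (star v) + I • vecMulVec v (star u))
          + vecMulVec v (star v) := by
      ext i j
      simp only [vecMulVec_apply, Pi.add_apply, Pi.star_apply, Pi.smul_apply, Matrix.add_apply,
        Matrix.smul_apply, star_add, smul_eq_mul, star_mul', Complex.star_def, Complex.conj_I]
      ring_nf
      rw [Complex.I_sq]
      ring
    have hab2 : (-I) • (K * ψ (vecMulVec u (star v))) + I • (K * ψ (vecMulVec v (star u))) = 0 := by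
      have hA := stepA (u + I • v)
      rw [e2] at hA
      simp only [map_add, _root_.map_smul, Matrix.mul_add, mul_smul_comm, stepA u, stepA v,
        smul_zero, zero_add, add_zero] at hA
      exact hA
    set a := K * ψ (vecMulVec u (star v)) with hadef
    set b := K * ψ (vecMulVec v (star u)) with hbdef
    have hsub : a - b = 0 := by
      have := congrArg (fun M => I • M) hab2
      simpa [smul_add, smul_smul, Complex.I_mul_I, smul_zero, sub_eq_add_neg] using this
    have h2a : (2:ℂ) • a = 0 := by
      have habs : a + a = (a + b) + (a - b) := by abel
      rw [two_smul, habs, hab, hsub, add_zero]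
    rcases smul_eq_zero.mp h2a with h' | h'
    · exact absurd h' two_ne_zero
    · exact h'
  -- Step B' : all matrices
  have stepB' : ∀ C : Matrix (Fin m) (Fin m) ℂ, K * ψ C = 0 := by
    intro C
    have hrepr : C = ∑ i : Fin m, ∑ j : Fin m,
        C i j • vecMulVec (Pi.single i 1) (star (Pi.single j 1)) := by
      have hstd : ∀ (i j : Fin m), single i j (C i j)
          = C i j • vecMulVec (Pi.single i 1) (star (Pi.single j 1)) := by
        intro i j
        ext p q
        simp only [Matrix.smul_apply, vecMulVec_apply, Pi.star_apply, Pi.single_apply,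
          Matrix.single, Matrix.of_apply, smul_eq_mul]
        by_cases hp : i = p <;> by_cases hq : j = q <;>
          simp [hp, hq, eq_comm]
      calc C = ∑ i : Fin m, ∑ j : Fin m, single i j (C i j) :=
            matrix_eq_sum_single C
        _ = _ := Finset.sum_congr rfl fun i _ => Finset.sum_congr rfl fun j _ => hstd i j
    calc K * ψ C = ∑ i : Fin m, ∑ j : Fin m, C i j • (K * ψ (vecMulVec (Pi.single i 1) (star (Pi.single j 1)))) := by
          conv_lhs => rw [hrepr]
          rw [map_sum, Finset.mul_sum]
          refine Finset.sum_congr rfl fun i _ => ?_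
          rw [map_sum, Finset.mul_sum]
          refine Finset.sum_congr rfl fun j _ => ?_
          rw [_root_.map_smul, mul_smul_comm]
      _ = 0 := by
          refine Finset.sum_eq_zero fun i _ => Finset.sum_eq_zero fun j _ => ?_
          rw [stepB, smul_zero]
  -- Step C : conclude
  apply trace_faithful
  rw [hadj (φ K) K]
  have hherm := psi_herm φ hφ ψ hadj (φ K)
  rw [← hherm, trace_mul_comm, stepB', trace_zero]
end
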